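/- arXiv:1604.08760 — 2 statements merged into one kernel-verified Lean document; each statement's English description precedes it below -/
import Mathlib

section
/- Let ρ < 0 be a real number and suppose x has at least one factor occurring at least twice; let L denote the maximum length of a factor of x with f(v) ≥ 2. Then every ρ-avoided word w in x with |w| > 2 satisfies |w| ≤ L + 2. -/
/-- The observed frequency `f(w)`: the number of starting positions at which
the word `w` occurs in the word `x` (occurrences may overlap). -/
def occ {α : Type*} [DecidableEq α] (x w : List α) : ℕ :=
  ((Finset.range (x.length + 1)).filter (fun i => (x.drop i).take w.length = w)).card

/-- The expected frequency `E(w)` of `w` in `x`: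
`E(w) = f(w_p)·f(w_s)/f(w_i)` if `f(w_i) > 0`, and `E(w) = 0` otherwise,
where `w_p = w.dropLast` is the longest proper prefix of `w`,
`w_s = w.tail` is the longest proper suffix of `w`, and
`w_i = w.tail.dropLast` is the infix of `w` obtained by deleting its
first and last letters. -/
noncomputable def expFreq {α : Type*} [DecidableEq α] (x w : List α) : ℝ :=
  if 0 < occ x w.tail.dropLast then
    ((occ x w.dropLast : ℝ) * (occ x w.tail : ℝ)) / (occ x w.tail.dropLast : ℝ)
  else 0

/-- The standard deviation `std(w) = (f(w) − E(w)) / max(√E(w), 1)`. -/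
noncomputable def stdDev {α : Type*} [DecidableEq α] (x w : List α) : ℝ :=
  ((occ x w : ℝ) - expFreq x w) / max (Real.sqrt (expFreq x w)) 1

/-- `w` is a minimal absent word of `x`: `w` is absent from `x`
(`f(w) = 0`) and every proper factor of `w` occurs in `x`. -/
def IsMAW {α : Type*} [DecidableEq α] (x w : List α) : Prop :=
  occ x w = 0 ∧ ∀ v : List α, v <:+: w → v ≠ w → 0 < occ x v

section OccAux
variable {α : Type*} [DecidableEq α]

lemma mem_occ_filter_iff (x w : List α) (i : ℕ) :
    i ∈ (Finset.range (x.length + 1)).filter (fun i => (x.drop i).take w.length = w) ↔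
      i ≤ x.length ∧ w <+: x.drop i := by
  simp [Finset.mem_filter, Finset.mem_range, Nat.lt_succ_iff, List.prefix_iff_eq_take, eq_comm]

lemma occ_pos_of (x : List α) {w : List α} {i : ℕ} (hi : i ≤ x.length)
    (h : w <+: x.drop i) : 0 < occ x w :=
  Finset.card_pos.mpr ⟨i, (mem_occ_filter_iff x w i).2 ⟨hi, h⟩⟩

lemma exists_of_occ_pos {x w : List α} (h : 0 < occ x w) :
    ∃ i, i ≤ x.length ∧ w <+: x.drop i := by
  obtain ⟨i, hi⟩ := Finset.card_pos.mp h
  exact ⟨i, (mem_occ_filter_iff x w i).1 hi⟩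

lemma occ_le_of_prefix (x : List α) {u v : List α} (h : u <+: v) :
    occ x v ≤ occ x u := by
  apply Finset.card_le_card
  intro i hi
  rw [mem_occ_filter_iff] at hi ⊢
  exact ⟨hi.1, h.trans hi.2⟩

lemma occ_cons_le (x : List α) (a : α) (u : List α) :
    occ x (a :: u) ≤ occ x u := by
  apply Finset.card_le_card_of_injOn (fun i => i + 1)
  · intro i hi
    rw [Finset.mem_coe, mem_occ_filter_iff] at hi ⊢
    obtain ⟨hi1, r, hr⟩ := hi
    have hlt : i < x.length := by
      by_contra hc
      rw [List.drop_eq_nil_of_le (le_of_not_gt hc)] at hr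
      simp at hr
    refine ⟨hlt, ?_⟩
    have : x.drop (i + 1) = u ++ r := by
      rw [← List.tail_drop, ← hr]
      simp
    exact ⟨r, this.symm ▸ rfl⟩
  · intro i _ j _ h
    simpa using h

lemma occ_unique {x u : List α} (h : occ x u = 1) {i j : ℕ}
    (hi : i ≤ x.length) (hiu : u <+: x.drop i)
    (hj : j ≤ x.length) (hju : u <+: x.drop j) : i = j := by
  obtain ⟨a, ha⟩ := Finset.card_eq_one.mp h
  have h1 := (mem_occ_filter_iff x u i).2 ⟨hi, hiu⟩
  have h2 := (mem_occ_filter_iff x u j).2 ⟨hj, hju⟩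
  rw [ha, Finset.mem_singleton] at h1 h2
  omega

end OccAux

/-- Let `ρ < 0` and suppose `x` has at least one factor occurring at least
twice; let `L` be the maximum length of a factor `v` of `x` with `f(v) ≥ 2`.
Then every `ρ`-avoided word `w` in `x` with `|w| > 2` satisfies `|w| ≤ L + 2`. -/
theorem stmt_9 {α : Type*} [DecidableEq α] (ρ : ℝ) (hρ : ρ < 0)
    (x : List α) (L : ℕ)
    (hL : IsGreatest {l : ℕ | ∃ v : List α, v <:+: x ∧ 2 ≤ occ x v ∧ v.length = l} L)
    (w : List α) (hw : 2 < w.length) (hav : stdDev x w ≤ ρ) :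
    w.length ≤ L + 2 := by
  have hD : (1:ℝ) ≤ max (Real.sqrt (expFreq x w)) 1 := le_max_right _ _
  have hD0 : (0:ℝ) < max (Real.sqrt (expFreq x w)) 1 := lt_of_lt_of_le one_pos hD
  have hnum : (occ x w : ℝ) - expFreq x w < 0 := by
    have h1 : ((occ x w : ℝ) - expFreq x w) ≤ ρ * max (Real.sqrt (expFreq x w)) 1 :=
      (div_le_iff₀ hD0).mp hav
    nlinarith
  have hcond : 0 < occ x w.tail.dropLast := by
    by_contra hc
    rw [expFreq, if_neg hc] at hnum
    simp only [sub_zero] at hnum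
    exact absurd hnum (not_lt.mpr (Nat.cast_nonneg _))
  obtain ⟨a, b, t, rfl⟩ : ∃ a b t, w = a :: b :: t := by
    rcases w with _ | ⟨a, _ | ⟨b, t⟩⟩
    · simp at hw
    · simp at hw
    · exact ⟨a, b, t, rfl⟩
  simp only [List.tail_cons] at hcond
  rcases Nat.lt_or_ge (occ x ((b :: t).dropLast)) 2 with hlt | hge
  · -- occ wi = 1 : derive a contradiction
    have h1 : occ x ((b :: t).dropLast) = 1 := by omega
    have hE : expFreq x (a :: b :: t)
        = ((occ x (a :: (b :: t).dropLast) : ℝ) * (occ x (b :: t) : ℝ)) / 1 := by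
      rw [expFreq]
      simp only [List.tail_cons, List.dropLast_cons₂]
      rw [if_pos hcond, h1]
      norm_num
    rw [hE] at hnum
    norm_num at hnum
    set p := occ x (a :: (b :: t).dropLast) with hp_def
    set q := occ x (b :: t) with hq_def
    have hp_le : p ≤ 1 := h1 ▸ occ_cons_le x a ((b :: t).dropLast)
    have hq_le : q ≤ 1 := h1 ▸ occ_le_of_prefix x (List.dropLast_prefix (b :: t))
    have hf_lt : occ x (a :: b :: t) < p * q := by
      have : ((occ x (a :: b :: t) : ℝ)) < ((p * q : ℕ) : ℝ) := by push_cast; linarith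
      exact_mod_cast this
    have hp1 : p = 1 := by
      rcases Nat.eq_zero_or_pos p with h | h
      · rw [h] at hf_lt; simp at hf_lt
      · omega
    have hq1 : q = 1 := by
      rcases Nat.eq_zero_or_pos q with h | h
      · rw [h] at hf_lt; simp [h] at hf_lt
      · omega
    have hf0 : occ x (a :: b :: t) = 0 := by
      rw [hp1, hq1] at hf_lt; omega
    obtain ⟨k, hk, hkp⟩ := exists_of_occ_pos (x := x) (hp1 ▸ Nat.one_pos)
    obtain ⟨j, hj, hjq⟩ := exists_of_occ_pos (x := x) (hq1 ▸ Nat.one_pos)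
    obtain ⟨rst, hr⟩ := hkp
    rw [List.cons_append] at hr
    have hk1 : k < x.length := by
      by_contra hc
      rw [List.drop_eq_nil_of_le (le_of_not_gt hc)] at hr
      exact List.cons_ne_nil _ _ hr
    have hdk : x.drop (k + 1) = (b :: t).dropLast ++ rst := by
      rw [← List.tail_drop, ← hr, List.tail_cons]
    have hwik : (b :: t).dropLast <+: x.drop (k + 1) := ⟨rst, hdk.symm⟩
    have hwij : (b :: t).dropLast <+: x.drop j :=
      (List.dropLast_prefix (b :: t)).trans hjq
    have hkj : k + 1 = j := occ_unique h1 hk1 hwik hj hwij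
    have hfull : (a :: b :: t) <+: x.drop k := by
      rw [← hr]
      exact List.cons_prefix_cons.mpr ⟨rfl, by rw [← hdk, hkj]; exact hjq⟩
    have := occ_pos_of x (le_of_lt hk1) hfull
    omega
  · -- occ wi ≥ 2 : use hL
    obtain ⟨i, hi, hpre⟩ := exists_of_occ_pos (Nat.lt_of_lt_of_le Nat.zero_lt_two hge)
    have hinf : (b :: t).dropLast <:+: x :=
      hpre.isInfix.trans (x.drop_suffix i).isInfix
    have hmem : (b :: t).dropLast.length ≤ L := hL.2 ⟨(b :: t).dropLast, hinf, hge, rfl⟩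
    simp only [List.length_dropLast, List.length_cons] at hmem ⊢
    omega
end

section
/- For all integers σ and n with 3 ≤ σ ≤ n, there exists a word x of length n over an alphabet of size σ that has at least (σ−1)·(σ−2)·⌊n/(σ−1)⌋ − (σ−2) minimal absent words. -/
set_option linter.unusedSectionVars false
open Fin.NatCast


lemma infix_iff' {α : Type*} (x w : List α) :
    w <:+: x ↔ ∃ p ≤ x.length, (x.drop p).take w.length = w := by
  constructor
  · rintro ⟨s, t, rfl⟩
    refine ⟨s.length, by simp, ?_⟩
    rw [List.append_assoc, List.drop_left, List.take_left]
  · rintro ⟨p, hp, h⟩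
    obtain ⟨t, ht⟩ := (List.take_prefix w.length (x.drop p))
    refine ⟨x.take p, t, ?_⟩
    rw [← h, List.append_assoc, ht, List.take_append_drop]

lemma occ_pos_iff {α : Type*} [DecidableEq α] (x w : List α) :
    0 < occ x w ↔ w <:+: x := by
  rw [occ, Finset.card_pos, infix_iff']
  constructor
  · rintro ⟨p, hp⟩
    simp only [Finset.mem_filter, Finset.mem_range] at hp
    exact ⟨p, by omega, hp.2⟩
  · rintro ⟨p, hp, h⟩
    exact ⟨p, by simp only [Finset.mem_filter, Finset.mem_range]; exact ⟨by omega, h⟩⟩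

lemma occ_eq_zero_iff {α : Type*} [DecidableEq α] (x w : List α) :
    occ x w = 0 ↔ ¬ w <:+: x := by
  rw [← occ_pos_iff]; omega

lemma proper_infix {α : Type*} {v w : List α} (h : v <:+: w) (hne : v ≠ w) :
    v <:+: w.dropLast ∨ v <:+: w.tail := by
  obtain ⟨s, t, rfl⟩ := h
  rcases eq_or_ne t [] with rfl | ht
  · right
    have hs : s ≠ [] := by rintro rfl; simp at hne
    rw [List.append_nil, List.tail_append_of_ne_nil hs]
    exact (List.suffix_append s.tail v).isInfix
  · left
    have : ((s ++ v) ++ t).dropLast = (s ++ v) ++ t.dropLast := by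
      rw [List.dropLast_append_of_ne_nil ht]
    rw [this]
    exact ⟨s, t.dropLast, by rw [List.append_assoc]⟩

-- occurrence via getElem
lemma infix_of_getElem {α : Type*} (x w : List α) (p : ℕ) (hp : p + w.length ≤ x.length)
    (h : ∀ k (hk : k < w.length), x[p+k]'(by omega) = w[k]) : w <:+: x := by
  rw [infix_iff']
  refine ⟨p, by omega, List.ext_getElem (by simp; omega) ?_⟩
  intro k h1 h2
  rw [List.getElem_take, List.getElem_drop]
  exact h k h2

lemma getElem_of_infix {α : Type*} {x w : List α} (h : w <:+: x) :
    ∃ p, p + w.length ≤ x.length ∧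
      ∀ k (hk : k < w.length) (hpk : p + k < x.length), x[p+k] = w[k] := by
  obtain ⟨s, t, rfl⟩ := h
  refine ⟨s.length, by simp, ?_⟩
  intro k hk hpk
  rw [List.getElem_append_left (by simp; omega), List.getElem_append_right (by omega)]
  congr 1
  omega

def gfun (r M p : ℕ) : ℕ := if M ∣ (p + 1 - r) ∧ r ≤ p then (p + 1 - r) / M else 0

lemma g_letter (r m i : ℕ) (hi : 1 ≤ i) : gfun r (m+1) (r + i*(m+1) - 1) = i := by
  have h1 : 1 ≤ i * (m+1) := Nat.one_le_iff_ne_zero.mpr (by positivity)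
  have h2 : r + i*(m+1) - 1 + 1 - r = i * (m+1) := by omega
  rw [gfun, if_pos ⟨by rw [h2]; exact Dvd.intro_left i rfl, by omega⟩, h2,
    Nat.mul_div_cancel _ (by omega)]

lemma g_zero' (r m a k : ℕ) (hk : k < m) : gfun r (m+1) (r + a*(m+1) + k) = 0 := by
  rw [gfun, if_neg]
  rintro ⟨h1, h2⟩
  have h3 : r + a*(m+1) + k + 1 - r = a * (m+1) + (k+1) := by omega
  rw [h3] at h1
  have h4 : (m+1) ∣ (k+1) := (Nat.dvd_add_right (Dvd.intro_left a rfl)).mp h1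
  have := Nat.le_of_dvd (by omega) h4
  omega

lemma g_lt (σ r m p n : ℕ) (hσ : 3 ≤ σ) (hn : n = r + (σ-1)*(m+1)) (hp : p < n) :
    gfun r (m+1) p < σ := by
  rw [gfun]
  split
  · rename_i h
    have h1 : p + 1 - r ≤ (σ-1)*(m+1) := by omega
    have h2 : (p + 1 - r) / (m+1) ≤ ((σ-1)*(m+1)) / (m+1) := Nat.div_le_div_right h1
    rw [Nat.mul_div_cancel _ (by omega)] at h2
    omega
  · omega

lemma g_inv (r m p t : ℕ) (ht : 1 ≤ t) (h : gfun r (m+1) p = t) :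
    r ≤ p ∧ p + 1 - r = t * (m+1) := by
  rw [gfun] at h
  split at h
  · rename_i hc
    obtain ⟨⟨c, hc1⟩, hc2⟩ := hc
    rw [hc1, Nat.mul_div_cancel_left _ (by omega)] at h
    exact ⟨hc2, by rw [hc1, h, Nat.mul_comm]⟩
  · omega

def xword (σ n r M : ℕ) [NeZero σ] : List (Fin σ) :=
  (List.range n).map fun p => ((gfun r M p : ℕ) : Fin σ)

lemma xword_length (σ n r M : ℕ) [NeZero σ] : (xword σ n r M).length = n := by
  simp [xword]

lemma xword_get (σ n r M : ℕ) [NeZero σ] (p : ℕ) (hp : p < (xword σ n r M).length) :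
    (xword σ n r M)[p] = ((gfun r M p : ℕ) : Fin σ) := by
  simp [xword]

section main
variable (σ n r m : ℕ) [NeZero σ] (hσ : 3 ≤ σ) (hn : n = r + (σ-1)*(m+1))
include hσ hn

-- the word a_i 0^s
lemma occA (i s : ℕ) (hi : 1 ≤ i) (hi2 : i ≤ σ - 2) (hs : s ≤ m) :
    ((i : Fin σ) :: List.replicate s (0 : Fin σ)) <:+: xword σ n r (m+1) := by
  have hmul : (i+1)*(m+1) = i*(m+1) + (m+1) := by ring
  have hmul2 : (i+1)*(m+1) ≤ (σ-1)*(m+1) := Nat.mul_le_mul_right _ (by omega)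
  have h1 : 1 ≤ i * (m+1) := Nat.one_le_iff_ne_zero.mpr (by positivity)
  refine infix_of_getElem _ _ (r + i*(m+1) - 1) ?_ ?_
  · rw [xword_length]; simp only [List.length_cons, List.length_replicate]; omega
  · intro k hk
    simp only [List.length_cons, List.length_replicate] at hk
    rw [xword_get σ n r (m+1) _ (by rw [xword_length]; omega)]
    match k with
    | 0 => simp only [List.getElem_cons_zero, Nat.add_zero, g_letter r m i hi]
    | (k+1) =>
      have he : r + i*(m+1) - 1 + (k+1) = r + i*(m+1) + k := by omega
      rw [he, g_zero' r m i k (by omega)]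
      simp

-- the word 0^s a_j
lemma occB (j s : ℕ) (hj : 1 ≤ j) (hj2 : j ≤ σ - 1) (hs : s ≤ m) :
    (List.replicate s (0 : Fin σ) ++ [(j : Fin σ)]) <:+: xword σ n r (m+1) := by
  have hmul : j*(m+1) ≤ (σ-1)*(m+1) := Nat.mul_le_mul_right _ (by omega)
  have h1 : 1 ≤ j * (m+1) := Nat.one_le_iff_ne_zero.mpr (by positivity)
  have h1' : (j-1)*(m+1) + (m+1) = j * (m+1) := by
    have hj' : j - 1 + 1 = j := by omega
    calc (j-1)*(m+1) + (m+1) = (j-1+1)*(m+1) := by ring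
      _ = j * (m+1) := by rw [hj']
  refine infix_of_getElem _ _ (r + j*(m+1) - 1 - s) ?_ ?_
  · rw [xword_length]
    simp only [List.length_append, List.length_replicate, List.length_cons,
      List.length_nil]
    omega
  · intro k hk
    simp only [List.length_append, List.length_replicate, List.length_cons,
      List.length_nil] at hk
    rw [xword_get σ n r (m+1) _ (by rw [xword_length]; omega)]
    rcases Nat.lt_or_ge k s with hks | hks
    · have he : r + j*(m+1) - 1 - s + k = r + (j-1)*(m+1) + (m - s + k) := by omega
      rw [he, g_zero' r m (j-1) (m - s + k) (by omega)]
      rw [List.getElem_append_left (by simpa using hks)]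
      simp
    · have hk2 : k = s := by omega
      subst hk2
      have he : r + j*(m+1) - 1 - k + k = r + j*(m+1) - 1 := by omega
      rw [he, g_letter r m j hj]
      rw [List.getElem_append_right (by simp)]
      simp

lemma absent (i j s : ℕ) (hi : 1 ≤ i) (hi2 : i ≤ σ - 1) (hj : 1 ≤ j) (hj2 : j ≤ σ - 1)
    (hs : s ≤ m) (hbad : s < m ∨ j ≠ i + 1) :
    ¬ ((i : Fin σ) :: (List.replicate s (0 : Fin σ) ++ [(j : Fin σ)])) <:+: xword σ n r (m+1) := by
  intro h
  obtain ⟨p, hlen, hget⟩ := getElem_of_infix h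
  rw [xword_length] at hlen
  simp only [List.length_cons, List.length_append, List.length_replicate,
    List.length_cons, List.length_nil] at hlen hget
  have hwlen : s + 1 + 1 = s + 2 := by omega
  -- position p : letter i
  have h0 := hget 0 (by omega) (by rw [xword_length]; omega)
  rw [xword_get σ n r (m+1) _ (by rw [xword_length]; omega)] at h0
  simp only [Nat.add_zero, List.getElem_cons_zero] at h0
  have hgplt : gfun r (m+1) p < σ := g_lt σ r m p n hσ hn (by omega)
  have hgp : gfun r (m+1) p = i := by
    have := congrArg Fin.val h0
    rwa [Fin.val_cast_of_lt hgplt, Fin.val_cast_of_lt (by omega : i < σ)] at this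
  obtain ⟨hrp, hpi⟩ := g_inv r m p i hi hgp
  -- position p + s + 1 : letter j
  have h1 := hget (s+1) (by omega) (by rw [xword_length]; omega)
  rw [xword_get σ n r (m+1) _ (by rw [xword_length]; omega)] at h1
  have hcons : ((i : Fin σ) :: (List.replicate s (0:Fin σ) ++ [(j : Fin σ)]))[s+1]'(by
      simp) = (j : Fin σ) := by
    rw [List.getElem_cons_succ, List.getElem_append_right (by simp)]
    simp
  rw [hcons] at h1
  have hgqlt : gfun r (m+1) (p + (s+1)) < σ := g_lt σ r m _ n hσ hn (by omega)
  have hgq : gfun r (m+1) (p + (s+1)) = j := by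
    have := congrArg Fin.val h1
    rwa [Fin.val_cast_of_lt hgqlt, Fin.val_cast_of_lt (by omega : j < σ)] at this
  obtain ⟨hrq, hqj⟩ := g_inv r m _ j hj hgq
  -- now arithmetic
  have hdiff : i * (m+1) + (s+1) = j * (m+1) := by omega
  have hdvd : (m+1) ∣ (s+1) := by
    have d1 : (m+1) ∣ i * (m+1) := Dvd.intro_left i rfl
    have d2 : (m+1) ∣ j * (m+1) := Dvd.intro_left j rfl
    have : s + 1 = j*(m+1) - i*(m+1) := by omega
    rw [this]
    exact Nat.dvd_sub d2 d1
  have hsm : s = m := by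
    have := Nat.le_of_dvd (by omega) hdvd
    omega
  have hj1 : j = i + 1 := by
    have h5 : (i+1) * (m+1) = i * (m+1) + (m+1) := by ring
    have h6 : j * (m+1) = (i+1) * (m+1) := by omega
    exact Nat.eq_of_mul_eq_mul_right (by omega) h6
  omega



lemma isMAW_fam (i j s : ℕ) (hi : 1 ≤ i) (hi2 : i ≤ σ - 2) (hj : 1 ≤ j) (hj2 : j ≤ σ - 1)
    (hs : s ≤ m) (hbad : s < m ∨ j ≠ i + 1) :
    IsMAW (xword σ n r (m+1)) ((i : Fin σ) :: (List.replicate s (0 : Fin σ) ++ [(j : Fin σ)])) := by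
  constructor
  · rw [occ_eq_zero_iff]
    exact absent σ n r m hσ hn i j s hi (by omega) hj hj2 hs hbad
  · intro v hv hne
    rw [occ_pos_iff]
    rcases proper_infix hv hne with h | h
    · have hd : ((i : Fin σ) :: (List.replicate s (0:Fin σ) ++ [(j : Fin σ)])).dropLast
          = (i : Fin σ) :: List.replicate s (0:Fin σ) := by
        rw [show ((i : Fin σ) :: (List.replicate s (0:Fin σ) ++ [(j : Fin σ)]))
            = ((i : Fin σ) :: List.replicate s (0:Fin σ)) ++ [(j : Fin σ)] by simp,
          List.dropLast_concat]
      rw [hd] at h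
      exact h.trans (occA σ n r m hσ hn i s hi hi2 hs)
    · rw [List.tail_cons] at h
      exact h.trans (occB σ n r m hσ hn j s hj hj2 hs)

end main

/-- For all integers `σ` and `n` with `3 ≤ σ ≤ n`, there exists a word `x` of
length `n` over an alphabet of size `σ` that has at least
`(σ−1)·(σ−2)·⌊n/(σ−1)⌋ − (σ−2)` minimal absent words. -/
theorem stmt_13 (σ n : ℕ) (hσ : 3 ≤ σ) (hσn : σ ≤ n) :
    ∃ x : List (Fin σ), x.length = n ∧
      (σ - 1) * (σ - 2) * (n / (σ - 1)) - (σ - 2) ≤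
        {w : List (Fin σ) | IsMAW x w}.ncard := by
  haveI : NeZero σ := ⟨by omega⟩
  set q := n / (σ-1) with hq
  set r := n % (σ-1) with hr
  have hq1 : 1 ≤ q := (Nat.one_le_div_iff (by omega)).mpr (by omega)
  set m := q - 1 with hm
  have hqm : q = m + 1 := by omega
  have hrlt : r < σ - 1 := Nat.mod_lt _ (by omega)
  have hn : n = r + (σ-1)*(m+1) := by
    have h := Nat.div_add_mod n (σ-1)
    rw [← hq, ← hr, hqm] at h
    omega
  set x := xword σ n r (m+1) with hx
  refine ⟨x, xword_length σ n r (m+1), ?_⟩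
  set φ : ℕ × ℕ × ℕ → List (Fin σ) :=
    fun t => (t.1 : Fin σ) :: (List.replicate t.2.2 (0 : Fin σ) ++ [(t.2.1 : Fin σ)]) with hφ
  set P : Finset (ℕ × ℕ × ℕ) :=
    (Finset.Icc 1 (σ-2)) ×ˢ (Finset.Icc 1 (σ-1)) ×ˢ (Finset.range (m+1)) with hP
  set S : Finset (ℕ × ℕ × ℕ) := P.filter (fun t => t.2.2 ≠ m ∨ t.2.1 ≠ t.1 + 1) with hS
  have hmem : ∀ t ∈ S, 1 ≤ t.1 ∧ t.1 ≤ σ-2 ∧ 1 ≤ t.2.1 ∧ t.2.1 ≤ σ-1 ∧ t.2.2 ≤ m ∧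
      (t.2.2 < m ∨ t.2.1 ≠ t.1+1) := by
    intro t ht
    simp only [hS, hP, Finset.mem_filter, Finset.mem_product, Finset.mem_Icc,
      Finset.mem_range] at ht
    omega
  -- membership in MAW set
  have hsub : ↑(S.image φ) ⊆ {w : List (Fin σ) | IsMAW x w} := by
    intro w hw
    simp only [Finset.coe_image, Set.mem_image, Finset.mem_coe] at hw
    obtain ⟨t, ht, rfl⟩ := hw
    obtain ⟨h1, h2, h3, h4, h5, h6⟩ := hmem t ht
    exact isMAW_fam σ n r m hσ hn t.1 t.2.1 t.2.2 h1 h2 h3 h4 h5 h6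
  -- injectivity
  have hinj : Set.InjOn φ ↑S := by
    intro a ha b hb heq
    obtain ⟨ha1, ha2, ha3, ha4, ha5, ha6⟩ := hmem a (by simpa using ha)
    obtain ⟨hb1, hb2, hb3, hb4, hb5, hb6⟩ := hmem b (by simpa using hb)
    simp only [hφ, List.cons.injEq] at heq
    obtain ⟨hhead, htail⟩ := heq
    have hslen : a.2.2 = b.2.2 := by
      have := congrArg List.length htail
      simpa using this
    have hia : a.1 = b.1 := by
      have := congrArg Fin.val hhead
      rwa [Fin.val_cast_of_lt (by omega : a.1 < σ),
        Fin.val_cast_of_lt (by omega : b.1 < σ)] at this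
    have hja : a.2.1 = b.2.1 := by
      rw [hslen] at htail
      have h2 := (List.append_inj htail (by simp)).2
      have h3 : ((a.2.1 : ℕ) : Fin σ) = ((b.2.1 : ℕ) : Fin σ) := by
        simpa using h2
      have := congrArg Fin.val h3
      rwa [Fin.val_cast_of_lt (by omega : a.2.1 < σ),
        Fin.val_cast_of_lt (by omega : b.2.1 < σ)] at this
    exact Prod.ext hia (Prod.ext hja hslen)
  -- finiteness of the MAW set
  have hfin : {w : List (Fin σ) | IsMAW x w}.Finite := by
    apply Set.Finite.subset (List.finite_length_le (Fin σ) (n+1))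
    intro w hw
    simp only [Set.mem_setOf_eq] at hw ⊢
    have hwne : w ≠ [] := by
      rintro rfl
      have h00 : occ x [] = x.length + 1 := by
        simp [occ]
      have h01 := hw.1
      omega
    have hlen1 : 1 ≤ w.length := List.length_pos_iff.mpr hwne
    have hne : w.dropLast ≠ w := by
      intro he
      have := congrArg List.length he
      rw [List.length_dropLast] at this
      omega
    have hpos := hw.2 w.dropLast (List.dropLast_prefix w).isInfix hne
    rw [occ_pos_iff] at hpos
    have hll := hpos.length_le
    have hxlen : x.length = n := xword_length σ n r (m+1)
    rw [hxlen, List.length_dropLast] at hll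
    omega
  -- cardinality of S
  have hcardP : P.card = (σ-2) * ((σ-1) * (m+1)) := by
    simp [hP, Nat.card_Icc]
  have hbadcard : (P.filter (fun t => ¬(t.2.2 ≠ m ∨ t.2.1 ≠ t.1 + 1))).card = σ - 2 := by
    have himg : P.filter (fun t => ¬(t.2.2 ≠ m ∨ t.2.1 ≠ t.1 + 1))
        = (Finset.Icc 1 (σ-2)).image (fun i => (i, i+1, m)) := by
      ext ⟨a, b, c⟩
      simp only [hP, Finset.mem_filter, Finset.mem_product, Finset.mem_Icc,
        Finset.mem_range, Finset.mem_image, not_or, not_not, Prod.mk.injEq]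
      constructor
      · rintro ⟨⟨h1, h2, h3⟩, h4, h5⟩
        exact ⟨a, by omega, rfl, by omega, by omega⟩
      · rintro ⟨i, hi, rfl, rfl, rfl⟩
        omega
    rw [himg, Finset.card_image_of_injective _
      (by intro a b hab; simp only [Prod.mk.injEq] at hab; exact hab.1), Nat.card_Icc]
    omega
  have hScard : S.card = (σ-2) * ((σ-1) * (m+1)) - (σ-2) := by
    have h := Finset.card_filter_add_card_filter_not
      (s := P) (p := fun t => t.2.2 ≠ m ∨ t.2.1 ≠ t.1 + 1)
    rw [← hS] at h
    omega
  have h1 : (S.image φ).card = S.card := Finset.card_image_of_injOn hinj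
  have h2 := Set.ncard_le_ncard hsub hfin
  rw [Set.ncard_coe_finset, h1, hScard] at h2
  have h3 : (σ-1)*(σ-2)*q = (σ-2)*((σ-1)*(m+1)) := by rw [hqm]; ring
  omega
end
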